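/- Let 0 < a < b. The function s(x) = √(b²+x) - √(a²+x), defined for x ≥ 0, satisfies s(x) ≤ (b-a)(1 - x/(2ab) + x²(a²+ab+b²)/(8a³b³)) for all x ≥ 0. -/

import Mathlib

/-- Cleared-denominator Taylor lower bound for the square root:
`8c⁴ + 4c²x - x² ≤ 8c³·s` whenever `s² = c² + x`, `c ≤ s`. -/
lemma sqrt_taylor_lower_aux (c x s : ℝ) (hc : 0 < c) (hx : 0 ≤ x)
    (hs2 : s^2 = c^2 + x) (hcs : c ≤ s) :
    8*c^4 + 4*c^2*x - x^2 ≤ 8*c^3*s := by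
  have h1 : 0 ≤ 2*c^2 + x - 2*c*s := by nlinarith [sq_nonneg (s - c)]
  have hsc : 0 < s + c := by linarith
  rcases le_or_gt x (4*c^2) with h4 | h4
  · have key : 2*c*(s+c)*(8*c^3*s - (8*c^4+4*c^2*x-x^2)) =
        x^3 + x*(4*c^2-x)*(2*c^2+x-2*c*s) := by
      linear_combination (16*c^4) * hs2
    have hP1 : 0 ≤ x*(4*c^2-x)*(2*c^2+x-2*c*s) :=
      mul_nonneg (mul_nonneg hx (by linarith)) h1
    nlinarith [key, hP1, mul_pos hc hsc, pow_nonneg hx 3]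
  · nlinarith [mul_nonneg hx (sub_nonneg.2 hcs), mul_pos hc hc, mul_pos (mul_pos hc hc) hc]

set_option maxHeartbeats 1000000 in
/-- Taylor-type upper bound for s(x) = √(b²+x) - √(a²+x). -/
theorem sqrt_diff_taylor_bound (a b : ℝ) (ha : 0 < a) (hab : a < b) (x : ℝ) (hx : 0 ≤ x) :
    Real.sqrt (b^2 + x) - Real.sqrt (a^2 + x) ≤
      (b - a) * (1 - x / (2 * a * b) + x^2 * (a^2 + a * b + b^2) / (8 * a^3 * b^3)) := by
  have hb : 0 < b := ha.trans hab
  set u := Real.sqrt (a^2 + x) with hu'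
  set v := Real.sqrt (b^2 + x) with hv'
  have hu2 : u^2 = a^2 + x := Real.sq_sqrt (by positivity)
  have hv2 : v^2 = b^2 + x := Real.sq_sqrt (by positivity)
  have hau : a ≤ u := by
    nlinarith [Real.sqrt_nonneg (a^2+x), hu2]
  have hbv : b ≤ v := by
    nlinarith [Real.sqrt_nonneg (b^2+x), hv2]
  have huv : u ≤ v := Real.sqrt_le_sqrt (by nlinarith)
  clear_value u v
  set Q : ℝ := 8*a^3*b^3 - 4*a^2*b^2*x + x^2*(a^2+a*b+b^2) with hQ'
  clear_value Q
  have hQ : 0 < Q := by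
    rw [hQ']
    nlinarith [sq_nonneg ((a^2+a*b)*x - 2*a^2*b^2), sq_nonneg (b*x),
      mul_pos (mul_pos (mul_pos ha ha) (mul_pos ha ha)) (mul_pos hb (mul_pos hb hb)),
      mul_pos (mul_pos (mul_pos ha ha) (mul_pos ha hb)) (mul_pos hb (mul_pos hb hb)),
      (show (0:ℝ) < a^2 + a*b by positivity)]
  -- key inequality : 8a³b³(a+b) ≤ (u+v)·Q
  have key : 8*a^3*b^3*(a+b) ≤ (u+v)*Q := by
    rcases le_or_gt x (4*a^2) with h4 | h4
    · -- Taylor lower bounds on u and v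
      have hLa := sqrt_taylor_lower_aux a x u ha hx hu2 hau
      have hLb := sqrt_taylor_lower_aux b x v hb hx hv2 hbv
      have hM : b^3*(8*a^4+4*a^2*x-x^2) + a^3*(8*b^4+4*b^2*x-x^2) ≤ 8*a^3*b^3*(u+v) := by
        nlinarith [mul_le_mul_of_nonneg_left hLa (by positivity : (0:ℝ) ≤ b^3),
          mul_le_mul_of_nonneg_left hLb (by positivity : (0:ℝ) ≤ a^3)]
      have hT : 0 ≤ 8*a^2*b^2*(a^2+b^2) - x*(a^4+a^2*b^2+b^4) := by
        have h1 : 0 ≤ (4*a^2 - x)*(a^4+a^2*b^2+b^4) :=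
          mul_nonneg (by linarith) (by positivity)
        have h2 : a^2 ≤ b^2 := by nlinarith
        have h3 : a^4 ≤ b^4 := by nlinarith
        nlinarith [h1, mul_nonneg (mul_nonneg (sq_nonneg a) (sq_nonneg b)) (sub_nonneg.2 h2),
          mul_nonneg (sq_nonneg a) (sub_nonneg.2 h3), (show (0:ℝ) ≤ a^4*b^2 by positivity)]
      have hid : (b^3*(8*a^4+4*a^2*x-x^2) + a^3*(8*b^4+4*b^2*x-x^2)) * Q =
          64*a^6*b^6*(a+b) + (a+b)*x^3*(8*a^2*b^2*(a^2+b^2) - x*(a^4+a^2*b^2+b^4)) := by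
        rw [hQ']; ring
      have h8 : (0:ℝ) < 8*a^3*b^3 := by positivity
      have hmul : (b^3*(8*a^4+4*a^2*x-x^2) + a^3*(8*b^4+4*b^2*x-x^2)) * Q ≤ (8*a^3*b^3*(u+v)) * Q :=
        mul_le_mul_of_nonneg_right hM hQ.le
      have hxT : 0 ≤ (a+b)*x^3*(8*a^2*b^2*(a^2+b^2) - x*(a^4+a^2*b^2+b^4)) :=
        mul_nonneg (mul_nonneg (by positivity) (by positivity)) hT
      have h64 : 8*a^3*b^3*(8*a^3*b^3*(a+b)) ≤ 8*a^3*b^3*((u+v)*Q) := by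
        linarith [hmul, hid, hxT]
      exact (mul_le_mul_iff_of_pos_left h8).mp h64
    · -- here Q ≥ 8a³b³
      have hQbig : 8*a^3*b^3 ≤ Q := by
        rw [hQ']
        nlinarith [mul_nonneg (mul_nonneg hx (by linarith : (0:ℝ) ≤ x - 4*a^2))
            (by positivity : (0:ℝ) ≤ a^2+a*b+b^2),
          mul_nonneg hx (by positivity : (0:ℝ) ≤ a^2*(a^2+a*b))]
      have : (a+b)*(8*a^3*b^3) ≤ (u+v)*Q :=
        mul_le_mul (by linarith) hQbig (by positivity) (by linarith)
      linarith [this]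
  -- conclude
  have hdiff : (v-u)*(u+v) = (b-a)*(a+b) := by linear_combination hv2 - hu2
  have huv0 : 0 ≤ v - u := by linarith
  have h8 : (0:ℝ) < 8*a^3*b^3 := by positivity
  have hstep : (v-u) * (8*a^3*b^3) * (a+b) ≤ (b-a)*Q*(a+b) := by
    have h1 : (v-u) * (8*a^3*b^3*(a+b)) ≤ (v-u) * ((u+v)*Q) :=
      mul_le_mul_of_nonneg_left key huv0
    have h2 : (v-u) * ((u+v)*Q) = (b-a)*(a+b)*Q := by
      rw [← mul_assoc, hdiff]
    linarith [h1, h2]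
  have hab2 : (0:ℝ) < a + b := by linarith
  have hfin : v - u ≤ (b-a)*Q / (8*a^3*b^3) := by
    rw [le_div_iff₀ h8]
    exact le_of_mul_le_mul_right hstep hab2
  refine hfin.trans_eq ?_
  rw [hQ']
  field_simp
  ring
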